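/- Let m ≥ 1 and w_1,…,w_n be positive integers summing to m, with f_i = (∑_{j<i} w_j)/m + w_i/(2m). For each i let σ_i be the first ⌈log₂(m/w_i)⌉ + 1 bits of the binary expansion of f_i. Then the σ_i are pairwise distinct, and moreover no σ_i is a prefix of σ_{i'} for i ≠ i'. -/

import Mathlib

open Finset

/-- The first `L` bits of the binary expansion of a real `f ∈ [0,1)`. -/
noncomputable def binaryBits (f : ℝ) (L : ℕ) : List Bool :=
  (List.range L).map (fun k => decide (⌊f * 2 ^ (k + 1)⌋₊ % 2 = 1))

lemma binaryBits_length (f : ℝ) (L : ℕ) : (binaryBits f L).length = L := by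
  simp [binaryBits]

lemma floor_eq_of_bits_eq {f f' : ℝ} (hf1 : f < 1) (hf1' : f' < 1)
    (L : ℕ) (h : ∀ k < L, ⌊f * 2 ^ (k + 1)⌋₊ % 2 = ⌊f' * 2 ^ (k + 1)⌋₊ % 2) :
    ⌊f * 2 ^ L⌋₊ = ⌊f' * 2 ^ L⌋₊ := by
  induction L with
  | zero =>
    rw [Nat.floor_eq_zero.2 (by simpa using hf1), Nat.floor_eq_zero.2 (by simpa using hf1')]
  | succ L ih =>
    have ih' := ih (fun k hk => h k (Nat.lt_succ_of_lt hk))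
    have e1 : ⌊f * 2 ^ (L+1)⌋₊ / 2 = ⌊f * 2 ^ L⌋₊ := by
      rw [← Nat.floor_div_natCast]
      congr 1
      push_cast
      ring
    have e1' : ⌊f' * 2 ^ (L+1)⌋₊ / 2 = ⌊f' * 2 ^ L⌋₊ := by
      rw [← Nat.floor_div_natCast]
      congr 1
      push_cast
      ring
    have := h L (Nat.lt_succ_self L)
    omega

lemma sub_lt_of_floor_eq {f f' : ℝ} (hf0' : 0 ≤ f')
    (L : ℕ) (h : ⌊f * 2 ^ L⌋₊ = ⌊f' * 2 ^ L⌋₊) : f - f' < 1 / 2 ^ L := by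
  have h2 : (0:ℝ) < 2 ^ L := by positivity
  have hub : f * 2 ^ L < ⌊f * 2 ^ L⌋₊ + 1 := Nat.lt_floor_add_one _
  have hlb : (⌊f' * 2 ^ L⌋₊ : ℝ) ≤ f' * 2 ^ L := Nat.floor_le (by positivity)
  rw [h] at hub
  rw [lt_div_iff₀ h2]
  nlinarith

theorem truncated_expansions_prefix_free (n m : ℕ) (hm : 1 ≤ m) (w : Fin n → ℕ)
    (hw : ∀ i, 0 < w i) (hsum : ∑ i, w i = m)
    (f : Fin n → ℝ)
    (hf : ∀ i, f i = (∑ j ∈ Finset.Iio i, (w j : ℝ)) / m + (w i : ℝ) / (2 * m))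
    (σ : Fin n → List Bool)
    (hσ : ∀ i, σ i = binaryBits (f i) ((⌈Real.logb 2 ((m : ℝ) / (w i : ℝ))⌉).toNat + 1)) :
    (∀ i i' : Fin n, i ≠ i' → σ i ≠ σ i') ∧
      (∀ i i' : Fin n, i ≠ i' → ¬ (σ i <+: σ i')) := by
  --
  have hm' : (0:ℝ) < m := by exact_mod_cast hm
  set L : Fin n → ℕ := fun i => (⌈Real.logb 2 ((m : ℝ) / (w i : ℝ))⌉).toNat + 1 with hL
  -- basic sum facts
  have hIic : ∀ i : Fin n, (∑ j ∈ Finset.Iio i, w j) + w i ≤ m := by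
    intro i
    have h1 : (∑ j ∈ Finset.Iio i, w j) + w i = ∑ j ∈ Finset.Iic i, w j := by
      rw [← Finset.Iio_insert, Finset.sum_insert (by simp)]
      ring
    rw [h1, ← hsum]
    exact Finset.sum_le_sum_of_subset (Finset.subset_univ _)
  have hwm : ∀ i, w i ≤ m := fun i => le_trans (Nat.le_add_left _ _) (hIic i)
  -- f bounds
  have hf0 : ∀ i, 0 ≤ f i := by
    intro i; rw [hf i]; positivity
  have hf1 : ∀ i, f i < 1 := by
    intro i
    rw [hf i]
    have h1 : ((∑ j ∈ Finset.Iio i, w j : ℕ) : ℝ) + w i ≤ m := by exact_mod_cast hIic i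
    push_cast at h1
    have hwi : (0:ℝ) < w i := by exact_mod_cast hw i
    rw [div_add_div _ _ (ne_of_gt hm') (by positivity)]
    rw [div_lt_one (by positivity)]
    nlinarith
  -- separation : for i < i'
  have hsep : ∀ i i' : Fin n, i < i' → ((w i : ℝ) + w i') / (2 * m) ≤ f i' - f i := by
    intro i i' hlt
    have hb : (∑ j ∈ Finset.Iio i, w j) + w i ≤ ∑ j ∈ Finset.Iio i', w j := by
      have h1 : (∑ j ∈ Finset.Iio i, w j) + w i = ∑ j ∈ Finset.Iic i, w j := by
        rw [← Finset.Iio_insert, Finset.sum_insert (by simp)]; ring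
      rw [h1]
      exact Finset.sum_le_sum_of_subset (fun j hj =>
        Finset.mem_Iio.2 (lt_of_le_of_lt (Finset.mem_Iic.1 hj) hlt))
    have hb' : ((∑ j ∈ Finset.Iio i, (w j : ℝ))) + w i ≤ ∑ j ∈ Finset.Iio i', (w j : ℝ) := by
      exact_mod_cast hb
    rw [hf i, hf i']
    rw [div_le_iff₀ (by positivity)]
    have e1 : ∀ x : ℝ, x / m * (2 * m) = 2 * x := by intro x; field_simp
    have e2 : ∀ x : ℝ, x / (2 * m) * (2 * m) = x := by intro x; field_simp
    nlinarith [e1 (∑ j ∈ Finset.Iio i, (w j : ℝ)), e1 (∑ j ∈ Finset.Iio i', (w j : ℝ)),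
      e2 (w i : ℝ), e2 (w i' : ℝ)]
  -- 2^(L i) bound
  have hpow : ∀ i : Fin n, 1 / (2:ℝ) ^ (L i) ≤ (w i : ℝ) / (2 * m) := by
    intro i
    have hwi : (0:ℝ) < w i := by exact_mod_cast hw i
    have hq : (0:ℝ) < (m : ℝ) / (w i : ℝ) := by positivity
    set t := (⌈Real.logb 2 ((m : ℝ) / (w i : ℝ))⌉).toNat with ht
    have hlog : Real.logb 2 ((m : ℝ) / (w i : ℝ)) ≤ (t : ℝ) := by
      refine le_trans (Int.le_ceil _) ?_
      exact_mod_cast Int.self_le_toNat _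
    have h1 : (m : ℝ) / (w i : ℝ) ≤ 2 ^ t := by
      calc (m : ℝ) / (w i : ℝ) = 2 ^ Real.logb 2 ((m : ℝ) / (w i : ℝ)) :=
            (Real.rpow_logb two_pos (by norm_num) hq).symm
        _ ≤ 2 ^ (t : ℝ) := Real.rpow_le_rpow_of_exponent_le one_le_two hlog
        _ = 2 ^ t := by rw [Real.rpow_natCast]
    have h2 : 2 * (m:ℝ) ≤ (w i) * 2 ^ (L i) := by
      have : (m : ℝ) ≤ w i * 2 ^ t := by
        rw [div_le_iff₀ hwi] at h1; linarith
      have hLi : (2:ℝ) ^ (L i) = 2 * 2 ^ t := by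
        simp only [hL, ← ht]; rw [pow_succ]; ring
      rw [hLi]; nlinarith
    rw [div_le_div_iff₀ (by positivity) (by positivity)]
    linarith
  -- core : prefix-free
  have key : ∀ i i' : Fin n, i ≠ i' → ¬ (σ i <+: σ i') := by
    intro i i' hne hpre
    have hlen : L i ≤ L i' := by
      have := hpre.length_le
      rwa [hσ i, hσ i', binaryBits_length, binaryBits_length] at this
    have hbits : ∀ k < L i, ⌊f i * 2 ^ (k + 1)⌋₊ % 2 = ⌊f i' * 2 ^ (k + 1)⌋₊ % 2 := by
      intro k hk
      have hk1 : k < (σ i).length := by rw [hσ i, binaryBits_length]; exact hk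
      have hk2 : k < (σ i').length := lt_of_lt_of_le hk1 hpre.length_le
      have := hpre.getElem (i := k) hk1
      simp only [hσ i, hσ i', binaryBits, List.getElem_map, List.getElem_range] at this
      rw [decide_eq_decide] at this
      omega
    have hfl := floor_eq_of_bits_eq (hf1 i) (hf1 i') (L i) hbits
    have hd1 : f i - f i' < 1 / 2 ^ (L i) := sub_lt_of_floor_eq (hf0 i') (L i) hfl
    have hd2 : f i' - f i < 1 / 2 ^ (L i) := sub_lt_of_floor_eq (hf0 i) (L i) hfl.symm
    have hwi : (0:ℝ) < w i := by exact_mod_cast hw i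
    have hwi' : (0:ℝ) < w i' := by exact_mod_cast hw i'
    rcases lt_or_gt_of_ne hne with h | h
    · have := hsep i i' h
      have h2 : (w i : ℝ) / (2 * m) < ((w i : ℝ) + w i') / (2 * m) := by
        rw [div_lt_div_iff₀ (by positivity) (by positivity)]; nlinarith
      linarith [hpow i]
    · have := hsep i' i h
      have h2 : (w i : ℝ) / (2 * m) < ((w i' : ℝ) + w i) / (2 * m) := by
        rw [div_lt_div_iff₀ (by positivity) (by positivity)]; nlinarith
      linarith [hpow i]
  refine ⟨fun i i' hne heq => key i i' hne (heq ▸ List.prefix_refl _), key⟩
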